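/- Let Δ be the discrete Laplacian on ℓ²(ℤ²), let Δ₁, Δ₂ be the coordinate Laplacians (Δ_iu)(n) := 2u(n) − u(n−e_i) − u(n+e_i), and set B := Δ₁(4−Δ₁) + Δ₂(4−Δ₂), the bounded extension of [Δ, iA₀]. Let ε ∈ (0,2) and let I = (ε, 4−ε) or I = (4+ε, 8−ε). Then for every real-valued continuous function θ : ℝ → ℝ vanishing outside I, the strict Mourre estimate θ(Δ)·B·θ(Δ) ≥ ε(4−ε)·θ(Δ)² holds (i.e. θ(Δ)Bθ(Δ) − ε(4−ε)θ(Δ)² is a positive semidefinite operator), where θ(Δ) is defined by the continuous functional calculus of the bounded self-adjoint operator Δ. -/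

import Mathlib

noncomputable section

open scoped ENNReal

/-- The Hilbert space ℓ²(ℤ²). -/
abbrev l2Z2 : Type := lp (fun _ : Fin 2 → ℤ => ℂ) 2

instance l2Z2_cfcReal : ContinuousFunctionalCalculus ℝ (l2Z2 →L[ℂ] l2Z2) IsSelfAdjoint :=
  IsSelfAdjoint.instContinuousFunctionalCalculus

/-- shift as linear isometry equiv -/
def shiftLI (σ : (Fin 2 → ℤ) ≃ (Fin 2 → ℤ)) : l2Z2 ≃ₗᵢ[ℂ] l2Z2 where
  toFun f := ⟨fun n => f (σ n), by
    apply memℓp_gen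
    have := (lp.memℓp f).summable (p := 2) (by norm_num)
    exact (σ.summable_iff (f := fun n => ‖f n‖ ^ (2:ℝ≥0∞).toReal)).mpr this⟩
  invFun f := ⟨fun n => f (σ.symm n), by
    apply memℓp_gen
    have := (lp.memℓp f).summable (p := 2) (by norm_num)
    exact (σ.symm.summable_iff (f := fun n => ‖f n‖ ^ (2:ℝ≥0∞).toReal)).mpr this⟩
  map_add' f g := by ext n; simp [lp.coeFn_add]; rfl
  map_smul' c f := by ext n; simp [lp.coeFn_smul]
  left_inv f := by ext n; simp
  right_inv f := by ext n; simp
  norm_map' f := by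
    rw [lp.norm_eq_tsum_rpow (by norm_num) , lp.norm_eq_tsum_rpow (by norm_num)]
    congr 1
    exact σ.tsum_eq (f := fun n => ‖f n‖ ^ (2:ℝ≥0∞).toReal)

@[simp] lemma shiftLI_apply (σ : (Fin 2 → ℤ) ≃ (Fin 2 → ℤ)) (f : l2Z2) (n : Fin 2 → ℤ) :
    (shiftLI σ f) n = f (σ n) := rfl

/-- shift as CLM -/
def shiftOp (σ : (Fin 2 → ℤ) ≃ (Fin 2 → ℤ)) : l2Z2 →L[ℂ] l2Z2 :=
  (shiftLI σ).toLinearIsometry.toContinuousLinearMap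

@[simp] lemma shiftOp_apply (σ : (Fin 2 → ℤ) ≃ (Fin 2 → ℤ)) (f : l2Z2) (n : Fin 2 → ℤ) :
    (shiftOp σ f) n = f (σ n) := rfl

lemma shiftOp_star (σ : (Fin 2 → ℤ) ≃ (Fin 2 → ℤ)) :
    star (shiftOp σ) = shiftOp σ.symm := by
  rw [ContinuousLinearMap.star_eq_adjoint]
  symm
  rw [ContinuousLinearMap.eq_adjoint_iff]
  intro x y
  rw [lp.inner_eq_tsum, lp.inner_eq_tsum]
  rw [← σ.tsum_eq (f := fun n => inner ℂ ((shiftOp σ.symm x) n) (y n))]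
  simp

lemma shiftOp_addRight_comm (a b : Fin 2 → ℤ) :
    Commute (shiftOp (Equiv.addRight a)) (shiftOp (Equiv.addRight b)) := by
  unfold Commute SemiconjBy
  ext u n
  simp [ContinuousLinearMap.mul_apply, add_right_comm]

def sh (i : Fin 2) : (Fin 2 → ℤ) ≃ (Fin 2 → ℤ) := Equiv.addRight (Pi.single i 1)

lemma update_add (n : Fin 2 → ℤ) (i : Fin 2) :
    Function.update n i (n i + 1) = sh i n := by
  funext j
  by_cases h : j = i
  · subst h; simp [sh]
  · simp [sh, Function.update_apply, h, Pi.single_apply]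

lemma update_sub (n : Fin 2 → ℤ) (i : Fin 2) :
    Function.update n i (n i - 1) = (sh i).symm n := by
  funext j
  by_cases h : j = i
  · subst h; simp [sh, sub_eq_add_neg]
  · simp [sh, Function.update_apply, h, Pi.single_apply, sub_eq_add_neg]

/-- conjugation of `M * star M` by a selfadjoint operator is positive. -/
lemma conj_mul_star_self_nonneg {T M : l2Z2 →L[ℂ] l2Z2} (hT : IsSelfAdjoint T) :
    0 ≤ T * (M * star M) * T := by
  simpa [hT.star_eq] using star_left_conjugate_nonneg (mul_star_self_nonneg M) T

lemma comm_one_sub {R : Type*} [Ring R] {a b : R} (h : Commute a b) :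
    Commute (1 - a) (1 - b) :=
  (Commute.one_right _).sub_right ((Commute.one_left b).sub_left h)

lemma comm_one_add {R : Type*} [Ring R] {a b : R} (h : Commute a b) :
    Commute (1 + a) (1 + b) :=
  (Commute.one_right _).add_right ((Commute.one_left b).add_left h)

lemma quad_comm {R : Type*} [Monoid R] {a b c d : R} (hbc : Commute b c) (hbd : Commute b d) :
    a * b * (c * d) = a * c * (d * b) := by
  rw [mul_assoc, mul_assoc]
  congr 1
  rw [← mul_assoc, hbc.eq, mul_assoc, hbd.eq, ← mul_assoc]

set_option maxHeartbeats 1600000 in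
/-- Strict Mourre estimate for the two-dimensional discrete Laplacian.
With B = Δ₁(4−Δ₁) + Δ₂(4−Δ₂) the bounded extension of [Δ, iA₀], for ε ∈ (0,2) and
I = (ε,4−ε) or I = (4+ε,8−ε), and any real continuous θ vanishing outside I,
θ(Δ)·B·θ(Δ) ≥ ε(4−ε)·θ(Δ)². -/
theorem strict_mourre_2d (Δop Δ1 Δ2 : l2Z2 →L[ℂ] l2Z2)
    (hΔ : ∀ (u : l2Z2) (n : Fin 2 → ℤ), (Δop u) n = ∑ i : Fin 2,
      (2 * u n - u (Function.update n i (n i + 1)) - u (Function.update n i (n i - 1))))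
    (hΔ1 : ∀ (u : l2Z2) (n : Fin 2 → ℤ), (Δ1 u) n =
      2 * u n - u (Function.update n 0 (n 0 + 1)) - u (Function.update n 0 (n 0 - 1)))
    (hΔ2 : ∀ (u : l2Z2) (n : Fin 2 → ℤ), (Δ2 u) n =
      2 * u n - u (Function.update n 1 (n 1 + 1)) - u (Function.update n 1 (n 1 - 1)))
    (hΔsa : IsSelfAdjoint Δop)
    (ε : ℝ) (hε0 : 0 < ε) (hε2 : ε < 2) (I : Set ℝ)
    (hI : I = Set.Ioo ε (4 - ε) ∨ I = Set.Ioo (4 + ε) (8 - ε))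
    (θ : ℝ → ℝ) (hθc : Continuous θ) (hθsupp : ∀ x : ℝ, x ∉ I → θ x = 0) :
    (cfc θ Δop * (Δ1 * (4 - Δ1) + Δ2 * (4 - Δ2)) * cfc θ Δop -
      ((ε * (4 - ε) : ℝ) : ℂ) • (cfc θ Δop) ^ 2).IsPositive := by
  set c : ℝ := ε * (4 - ε) with hc
  set T : l2Z2 →L[ℂ] l2Z2 := cfc θ Δop with hT
  have hTsa : IsSelfAdjoint T := cfc_predicate θ Δop
  set P : Fin 2 → (l2Z2 →L[ℂ] l2Z2) := fun i => shiftOp (sh i) with hP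
  set Q : Fin 2 → (l2Z2 →L[ℂ] l2Z2) := fun i => shiftOp (sh i).symm with hQ
  have hQ' : ∀ i, Q i = shiftOp (Equiv.addRight (-(Pi.single i 1))) := by
    intro i; rw [hQ]; simp only [sh, Equiv.addRight_symm]
  have hstarP : ∀ i, star (P i) = Q i := fun i => shiftOp_star _
  have hstarQ : ∀ i, star (Q i) = P i := by
    intro i
    rw [hQ]
    simp only [shiftOp_star, Equiv.symm_symm]
    rfl
  -- commutation relations between coordinate 0 and coordinate 1 shifts
  have hcPP : Commute (P 0) (P 1) := shiftOp_addRight_comm _ _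
  have hcPQ : Commute (P 0) (Q 1) := by rw [hQ']; exact shiftOp_addRight_comm _ _
  have hcQP : Commute (Q 0) (P 1) := by rw [hQ']; exact shiftOp_addRight_comm _ _
  have hcQQ : Commute (Q 0) (Q 1) := by rw [hQ', hQ']; exact shiftOp_addRight_comm _ _
  -- factorizations
  have hfac1 : Δ1 = (1 - P 0) * (1 - Q 0) := by
    ext u n
    rw [hΔ1, update_add, update_sub]
    simp [ContinuousLinearMap.mul_apply, ContinuousLinearMap.sub_apply, lp.coeFn_sub, hP, hQ]
    ring
  have hfac2 : Δ2 = (1 - P 1) * (1 - Q 1) := by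
    ext u n
    rw [hΔ2, update_add, update_sub]
    simp [ContinuousLinearMap.mul_apply, ContinuousLinearMap.sub_apply, lp.coeFn_sub, hP, hQ]
    ring
  have hfac1' : (4 : l2Z2 →L[ℂ] l2Z2) - Δ1 = (1 + P 0) * (1 + Q 0) := by
    ext u n
    simp only [ContinuousLinearMap.sub_apply, ContinuousLinearMap.add_apply,
      ContinuousLinearMap.mul_apply, ContinuousLinearMap.one_apply,
      ContinuousLinearMap.ofNat_apply, lp.coeFn_sub, lp.coeFn_add, Pi.sub_apply, Pi.add_apply]
    rw [hΔ1, update_add, update_sub]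
    simp [hP, hQ]
    ring
  have hfac2' : (4 : l2Z2 →L[ℂ] l2Z2) - Δ2 = (1 + P 1) * (1 + Q 1) := by
    ext u n
    simp only [ContinuousLinearMap.sub_apply, ContinuousLinearMap.add_apply,
      ContinuousLinearMap.mul_apply, ContinuousLinearMap.one_apply,
      ContinuousLinearMap.ofNat_apply, lp.coeFn_sub, lp.coeFn_add, Pi.sub_apply, Pi.add_apply]
    rw [hΔ2, update_add, update_sub]
    simp [hP, hQ]
    ring
  have hsum : Δop = Δ1 + Δ2 := by
    ext u n
    rw [hΔ u n, Fin.sum_univ_two]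
    simp only [ContinuousLinearMap.add_apply, lp.coeFn_add, Pi.add_apply]
    rw [hΔ1, hΔ2]
  -- positivity of the sandwiched cross terms
  have cross12 : 0 ≤ T * (Δ1 * Δ2) * T := by
    have hM : Δ1 * Δ2 = ((1 - P 0) * (1 - P 1)) * star ((1 - P 0) * (1 - P 1)) := by
      rw [hfac1, hfac2, star_mul, star_sub, star_sub, star_one, hstarP, hstarP]
      exact quad_comm (comm_one_sub hcQP) (comm_one_sub hcQQ)
    rw [hM]
    exact conj_mul_star_self_nonneg hTsa
  have cross21 : 0 ≤ T * (Δ2 * Δ1) * T := by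
    have hM : Δ2 * Δ1 = ((1 - P 1) * (1 - P 0)) * star ((1 - P 1) * (1 - P 0)) := by
      rw [hfac1, hfac2, star_mul, star_sub, star_sub, star_one, hstarP, hstarP]
      exact quad_comm (comm_one_sub hcPQ.symm) (comm_one_sub hcQQ.symm)
    rw [hM]
    exact conj_mul_star_self_nonneg hTsa
  have cross12' : 0 ≤ T * (((4 : l2Z2 →L[ℂ] l2Z2) - Δ1) * ((4 : l2Z2 →L[ℂ] l2Z2) - Δ2)) * T := by
    have hM : ((4 : l2Z2 →L[ℂ] l2Z2) - Δ1) * ((4 : l2Z2 →L[ℂ] l2Z2) - Δ2)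
        = ((1 + P 0) * (1 + P 1)) * star ((1 + P 0) * (1 + P 1)) := by
      rw [hfac1', hfac2', star_mul, star_add, star_add, star_one, hstarP, hstarP]
      exact quad_comm (comm_one_add hcQP) (comm_one_add hcQQ)
    rw [hM]
    exact conj_mul_star_self_nonneg hTsa
  have cross21' : 0 ≤ T * (((4 : l2Z2 →L[ℂ] l2Z2) - Δ2) * ((4 : l2Z2 →L[ℂ] l2Z2) - Δ1)) * T := by
    have hM : ((4 : l2Z2 →L[ℂ] l2Z2) - Δ2) * ((4 : l2Z2 →L[ℂ] l2Z2) - Δ1)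
        = ((1 + P 1) * (1 + P 0)) * star ((1 + P 1) * (1 + P 0)) := by
      rw [hfac1', hfac2', star_mul, star_add, star_add, star_one, hstarP, hstarP]
      exact quad_comm (comm_one_add hcPQ.symm) (comm_one_add hcQQ.symm)
    rw [hM]
    exact conj_mul_star_self_nonneg hTsa
  rw [← ContinuousLinearMap.nonneg_iff_isPositive]
  rcases hI with hI | hI
  · -- I = (ε, 4-ε); use B = Δ(4-Δ) + Δ1Δ2 + Δ2Δ1
    have hB : Δ1 * (4 - Δ1) + Δ2 * (4 - Δ2)
        = Δop * ((4 : l2Z2 →L[ℂ] l2Z2) - Δop) + (Δ1 * Δ2 + Δ2 * Δ1) := by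
      rw [hsum]; noncomm_ring
    have hmain : 0 ≤ T * (Δop * ((4 : l2Z2 →L[ℂ] l2Z2) - Δop)) * T - ((c : ℝ) : ℂ) • T ^ 2 := by
      have hpoly : cfc (fun x : ℝ => x * (4 - x)) Δop = Δop * ((4 : l2Z2 →L[ℂ] l2Z2) - Δop) := by
        rw [cfc_mul (fun x : ℝ => x) (fun x : ℝ => 4 - x) Δop,
          cfc_sub (fun _ : ℝ => (4 : ℝ)) (fun x : ℝ => x) Δop, cfc_id' ℝ Δop, cfc_const _ _,
          map_ofNat]
      have hkey : T * (Δop * ((4 : l2Z2 →L[ℂ] l2Z2) - Δop)) * T - ((c : ℝ) : ℂ) • T ^ 2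
          = cfc (fun x : ℝ => θ x * (x * (4 - x)) * θ x - c * θ x ^ 2) Δop := by
        rw [cfc_sub (fun x : ℝ => θ x * (x * (4 - x)) * θ x) (fun x : ℝ => c * θ x ^ 2) Δop,
          cfc_mul (fun x : ℝ => θ x * (x * (4 - x))) θ Δop,
          cfc_mul θ (fun x : ℝ => x * (4 - x)) Δop, hpoly,
          cfc_const_mul c (fun x : ℝ => θ x ^ 2) Δop, cfc_pow θ 2 Δop, Complex.coe_smul, hT]
        rfl
      rw [hkey]
      apply cfc_nonneg
      intro x _
      by_cases hx : x ∈ I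
      · rw [hI] at hx
        obtain ⟨hx1, hx2⟩ := hx
        have h1 : 0 ≤ (x - ε) * (4 - ε - x) * θ x ^ 2 := by
          apply mul_nonneg (mul_nonneg (by linarith) (by linarith)) (sq_nonneg _)
        nlinarith [h1]
      · rw [hθsupp x hx]; ring_nf; simp
    calc (0 : l2Z2 →L[ℂ] l2Z2)
        ≤ (T * (Δop * ((4 : l2Z2 →L[ℂ] l2Z2) - Δop)) * T - ((c : ℝ) : ℂ) • T ^ 2)
          + (T * (Δ1 * Δ2) * T + T * (Δ2 * Δ1) * T) :=
          add_nonneg hmain (add_nonneg cross12 cross21)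
      _ = T * (Δ1 * (4 - Δ1) + Δ2 * (4 - Δ2)) * T - ((c : ℝ) : ℂ) • T ^ 2 := by
          rw [hB, mul_add, mul_add, add_mul, add_mul]
          abel
  · -- I = (4+ε, 8-ε); use B = (8-Δ)(Δ-4) + (4-Δ1)(4-Δ2) + (4-Δ2)(4-Δ1)
    have hB : Δ1 * (4 - Δ1) + Δ2 * (4 - Δ2)
        = ((8 : l2Z2 →L[ℂ] l2Z2) - Δop) * (Δop - 4)
          + (((4 : l2Z2 →L[ℂ] l2Z2) - Δ1) * ((4 : l2Z2 →L[ℂ] l2Z2) - Δ2)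
            + ((4 : l2Z2 →L[ℂ] l2Z2) - Δ2) * ((4 : l2Z2 →L[ℂ] l2Z2) - Δ1)) := by
      rw [hsum]; noncomm_ring
      norm_num [zsmul_eq_mul]
    have hmain : 0 ≤ T * (((8 : l2Z2 →L[ℂ] l2Z2) - Δop) * (Δop - 4)) * T
        - ((c : ℝ) : ℂ) • T ^ 2 := by
      have hpoly : cfc (fun x : ℝ => (8 - x) * (x - 4)) Δop
          = ((8 : l2Z2 →L[ℂ] l2Z2) - Δop) * (Δop - (4 : l2Z2 →L[ℂ] l2Z2)) := by
        rw [cfc_mul (fun x : ℝ => 8 - x) (fun x : ℝ => x - 4) Δop,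
          cfc_sub (fun _ : ℝ => (8 : ℝ)) (fun x : ℝ => x) Δop,
          cfc_sub (fun x : ℝ => x) (fun _ : ℝ => (4 : ℝ)) Δop, cfc_id' ℝ Δop,
          cfc_const _ _, cfc_const _ _, map_ofNat, map_ofNat]
      have hkey : T * (((8 : l2Z2 →L[ℂ] l2Z2) - Δop) * (Δop - 4)) * T - ((c : ℝ) : ℂ) • T ^ 2
          = cfc (fun x : ℝ => θ x * ((8 - x) * (x - 4)) * θ x - c * θ x ^ 2) Δop := by
        rw [cfc_sub (fun x : ℝ => θ x * ((8 - x) * (x - 4)) * θ x) (fun x : ℝ => c * θ x ^ 2) Δop,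
          cfc_mul (fun x : ℝ => θ x * ((8 - x) * (x - 4))) θ Δop,
          cfc_mul θ (fun x : ℝ => (8 - x) * (x - 4)) Δop, hpoly,
          cfc_const_mul c (fun x : ℝ => θ x ^ 2) Δop, cfc_pow θ 2 Δop, Complex.coe_smul, hT]
        rfl
      rw [hkey]
      apply cfc_nonneg
      intro x _
      by_cases hx : x ∈ I
      · rw [hI] at hx
        obtain ⟨hx1, hx2⟩ := hx
        have h1 : 0 ≤ (x - 4 - ε) * (8 - ε - x) * θ x ^ 2 := by
          apply mul_nonneg (mul_nonneg (by linarith) (by linarith)) (sq_nonneg _)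
        nlinarith [h1]
      · rw [hθsupp x hx]; ring_nf; simp
    calc (0 : l2Z2 →L[ℂ] l2Z2)
        ≤ (T * (((8 : l2Z2 →L[ℂ] l2Z2) - Δop) * (Δop - 4)) * T - ((c : ℝ) : ℂ) • T ^ 2)
          + (T * (((4 : l2Z2 →L[ℂ] l2Z2) - Δ1) * ((4 : l2Z2 →L[ℂ] l2Z2) - Δ2)) * T
            + T * (((4 : l2Z2 →L[ℂ] l2Z2) - Δ2) * ((4 : l2Z2 →L[ℂ] l2Z2) - Δ1)) * T) :=
          add_nonneg hmain (add_nonneg cross12' cross21')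
      _ = T * (Δ1 * (4 - Δ1) + Δ2 * (4 - Δ2)) * T - ((c : ℝ) : ℂ) • T ^ 2 := by
          rw [hB, mul_add, mul_add, add_mul, add_mul]
          abel
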